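/- The number of connected components of the structured ε-pseudospectrum Λ_{S,ε}(A) is at most n. -/

import Mathlib

open Matrix Polynomial Set

noncomputable def MS {n : ℕ} (S : Finset (Fin n × Fin n))
    (z : EuclideanSpace ℂ {p : Fin n × Fin n // p ∈ S}) : Matrix (Fin n) (Fin n) ℂ :=
  fun i j => if h : (i, j) ∈ S then z ⟨(i, j), h⟩ else 0

/-- The structured ε-pseudospectrum `Λ_{S,ε}(A)`. -/
noncomputable def structPseudo {n : ℕ} (A : Matrix (Fin n) (Fin n) ℂ)
    (S : Finset (Fin n × Fin n)) (ε : ℝ) : Set ℂ :=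
  ⋃ z ∈ {z : EuclideanSpace ℂ {p : Fin n × Fin n // p ∈ S} | ‖z‖ ≤ ε},
    spectrum ℂ (A + MS S z)

/-- The strict structured ε-pseudospectrum `Λ'_{S,ε}(A)`. -/
noncomputable def structPseudoStrict {n : ℕ} (A : Matrix (Fin n) (Fin n) ℂ)
    (S : Finset (Fin n × Fin n)) (ε : ℝ) : Set ℂ :=
  ⋃ z ∈ {z : EuclideanSpace ℂ {p : Fin n × Fin n // p ∈ S} | ‖z‖ < ε},
    spectrum ℂ (A + MS S z)

section helpers

attribute [local instance] Matrix.linftyOpNormedAddCommGroup Matrix.linftyOpNormedRing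
  Matrix.linftyOpNormedAlgebra

variable {n : ℕ}

lemma charpoly_eval (B : Matrix (Fin n) (Fin n) ℂ) (μ : ℂ) :
    B.charpoly.eval μ = (μ • (1 : Matrix (Fin n) (Fin n) ℂ) - B).det := by
  rw [Matrix.charpoly, ← Polynomial.coe_evalRingHom, RingHom.map_det]
  congr 1
  ext i j
  by_cases h : i = j <;>
    simp [h, Matrix.charmatrix_apply, Matrix.one_apply, Matrix.smul_apply]

lemma mem_spectrum_iff_eval (B : Matrix (Fin n) (Fin n) ℂ) (μ : ℂ) :
    μ ∈ spectrum ℂ B ↔ B.charpoly.eval μ = 0 := by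
  rw [spectrum.mem_iff, charpoly_eval, Matrix.isUnit_iff_isUnit_det, isUnit_iff_ne_zero,
    not_ne_iff, Algebra.algebraMap_eq_smul_one]

lemma mem_spectrum_iff_det (B : Matrix (Fin n) (Fin n) ℂ) (μ : ℂ) :
    μ ∈ spectrum ℂ B ↔ (μ • (1 : Matrix (Fin n) (Fin n) ℂ) - B).det = 0 := by
  rw [mem_spectrum_iff_eval, charpoly_eval]

lemma MS_smul {S : Finset (Fin n × Fin n)} (t : ℝ)
    (z : EuclideanSpace ℂ {p : Fin n × Fin n // p ∈ S}) :
    MS S (t • z) = (t : ℂ) • MS S z := by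
  ext i j
  by_cases h : (i, j) ∈ S <;> simp [MS, h, PiLp.smul_apply, Complex.real_smul]

lemma MS_zero {S : Finset (Fin n × Fin n)} :
    MS S (0 : EuclideanSpace ℂ {p : Fin n × Fin n // p ∈ S}) = 0 := by
  ext i j
  by_cases h : (i, j) ∈ S <;> simp [MS, h]

lemma continuous_MS {S : Finset (Fin n × Fin n)} :
    Continuous (fun z : EuclideanSpace ℂ {p : Fin n × Fin n // p ∈ S} => MS S z) := by
  apply continuous_matrix
  intro i j
  by_cases h : (i, j) ∈ S <;> simp only [MS, h, dif_pos, dif_neg, not_false_iff]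
  · exact (EuclideanSpace.proj (⟨(i,j), h⟩ : {p : Fin n × Fin n // p ∈ S})).continuous
  · exact continuous_const

lemma multiset_pow_card_le_prod {δ : ℝ} (hδ : 0 ≤ δ) (s : Multiset ℝ)
    (h : ∀ x ∈ s, δ ≤ x) : δ ^ Multiset.card s ≤ s.prod := by
  induction s using Multiset.induction with
  | empty => simp
  | cons a s ih =>
    simp only [Multiset.card_cons, Multiset.prod_cons, pow_succ]
    have ha : δ ≤ a := h a (Multiset.mem_cons_self a s)
    have hs : δ ^ Multiset.card s ≤ s.prod := ih fun x hx => h x (Multiset.mem_cons_of_mem hx)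
    have h1 : (0:ℝ) ≤ δ ^ Multiset.card s := pow_nonneg hδ _
    calc δ ^ Multiset.card s * δ ≤ s.prod * a := by
          apply mul_le_mul hs ha hδ
          exact le_trans h1 hs
      _ = a * s.prod := mul_comm _ _

/-- root proximity: if `|p.eval μ|` is smaller than `δ ^ n`, `p` has a root within `δ` of `μ`. -/
lemma exists_root_near {p : ℂ[X]} (hp : p.Monic) (hdeg : p.natDegree = n)
    {δ : ℝ} (hδ : 0 < δ) (hδ1 : δ ≤ 1) {μ : ℂ}
    (h : ‖p.eval μ‖ < δ ^ n) :
    ∃ r ∈ p.roots, ‖μ - r‖ < δ := by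
  by_contra hcon
  push_neg at hcon
  have hsplits : p.Splits := IsAlgClosed.splits p
  have hfac := hsplits.eq_prod_roots_of_monic hp
  have heval : p.eval μ = ((p.roots.map fun r => μ - r)).prod := by
    conv_lhs => rw [hfac]
    rw [Polynomial.eval_multiset_prod, Multiset.map_map]
    congr 1
    apply Multiset.map_congr rfl
    intro r _
    simp
  have habs : ‖p.eval μ‖ = ((p.roots.map fun r => ‖μ - r‖)).prod := by
    rw [heval]
    rw [show (Multiset.map (fun r => ‖μ - r‖) p.roots)
        = Multiset.map (normHom : ℂ →*₀ ℝ) (Multiset.map (fun r => μ - r) p.roots) by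
      rw [Multiset.map_map]; rfl]
    exact (map_multiset_prod (normHom : ℂ →*₀ ℝ) _)
  have hcard : Multiset.card p.roots ≤ n := hdeg ▸ p.card_roots'
  have hlow : δ ^ n ≤ ‖p.eval μ‖ := by
    rw [habs]
    calc δ ^ n ≤ δ ^ (Multiset.card (p.roots.map fun r => ‖μ - r‖)) := by
          rw [Multiset.card_map]
          exact pow_le_pow_of_le_one hδ.le hδ1 hcard
      _ ≤ _ := by
          apply multiset_pow_card_le_prod hδ.le
          intro x hx
          obtain ⟨r, hr, rfl⟩ := Multiset.mem_map.mp hx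
          exact hcon r hr
  exact absurd h (not_lt.mpr hlow)

lemma structPseudo_isCompact (A : Matrix (Fin n) (Fin n) ℂ)
    (S : Finset (Fin n × Fin n)) (ε : ℝ) : IsCompact (structPseudo A S ε) := by
  set E := EuclideanSpace ℂ {p : Fin n × Fin n // p ∈ S}
  by_cases hε : 0 ≤ ε
  case neg =>
    have : structPseudo A S ε = ∅ := by
      apply Set.eq_empty_of_forall_notMem
      intro w hw
      simp only [structPseudo, Set.mem_iUnion, Set.mem_setOf_eq] at hw
      obtain ⟨z, hz, -⟩ := hw
      exact hε (le_trans (norm_nonneg z) hz)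
    rw [this]; exact isCompact_empty
  obtain ⟨C, hC⟩ : ∃ C : ℝ, ∀ z : E, ‖z‖ ≤ ε → ‖A + MS S z‖ ≤ C := by
    have hcont : Continuous fun z : E => ‖A + MS S z‖ :=
      (continuous_const.add continuous_MS).norm
    obtain ⟨z₀, -, hz₀⟩ := (isCompact_closedBall (0:E) ε).exists_isMaxOn
      (Metric.nonempty_closedBall.mpr hε) hcont.continuousOn
    exact ⟨‖A + MS S z₀‖, fun z hz =>
      hz₀ (by simpa [Metric.mem_closedBall, dist_zero_right] using hz)⟩
  set R : ℝ := C * ‖(1 : Matrix (Fin n) (Fin n) ℂ)‖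
  set Sig : Set (E × ℂ) :=
    {q | ‖q.1‖ ≤ ε ∧ (q.2 • (1 : Matrix (Fin n) (Fin n) ℂ) - (A + MS S q.1)).det = 0}
  have hSigclosed : IsClosed Sig := by
    apply IsClosed.inter
    · exact isClosed_le (continuous_fst.norm) continuous_const
    · apply isClosed_eq _ continuous_const
      apply Continuous.matrix_det
      exact (continuous_snd.smul continuous_const).sub
        (continuous_const.add (continuous_MS.comp continuous_fst))
  have hSigbdd : Sig ⊆ Metric.closedBall (0:E) ε ×ˢ Metric.closedBall (0:ℂ) R := by
    rintro ⟨z, μ⟩ ⟨hz, hdet⟩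
    constructor
    · simpa [Metric.mem_closedBall, dist_zero_right] using hz
    · have hμ : μ ∈ spectrum ℂ (A + MS S z) := (mem_spectrum_iff_det _ _).mpr hdet
      have := spectrum.subset_closedBall_norm_mul (𝕜 := ℂ) (A + MS S z) hμ
      refine Metric.closedBall_subset_closedBall ?_ this
      have h1 : (0:ℝ) ≤ ‖(1 : Matrix (Fin n) (Fin n) ℂ)‖ := norm_nonneg _
      exact mul_le_mul_of_nonneg_right (hC z hz) h1
  have hSigcompact : IsCompact Sig :=
    ((isCompact_closedBall _ _).prod (isCompact_closedBall _ _)).of_isClosed_subset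
      hSigclosed hSigbdd
  have himg : structPseudo A S ε = Prod.snd '' Sig := by
    ext w
    simp only [structPseudo, Set.mem_iUnion, Set.mem_setOf_eq, Set.mem_image, Prod.exists]
    constructor
    · rintro ⟨z, hz, hw⟩
      exact ⟨z, w, ⟨hz, (mem_spectrum_iff_det _ _).mp hw⟩, rfl⟩
    · rintro ⟨z, μ, ⟨hz, hdet⟩, rfl⟩
      exact ⟨z, hz, (mem_spectrum_iff_det _ _).mpr hdet⟩
  rw [himg]
  exact hSigcompact.image continuous_snd

lemma spectrum_finite (A : Matrix (Fin n) (Fin n) ℂ) : (spectrum ℂ A).Finite := by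
  apply Set.Finite.subset (A.charpoly.roots.toFinset).finite_toSet
  intro μ hμ
  rw [mem_spectrum_iff_eval] at hμ
  simpa using Polynomial.mem_roots'.mpr ⟨(A.charpoly_monic).ne_zero, hμ⟩

lemma spectrum_ncard_le (A : Matrix (Fin n) (Fin n) ℂ) : (spectrum ℂ A).ncard ≤ n := by
  have hsub : spectrum ℂ A ⊆ ↑(A.charpoly.roots.toFinset) := by
    intro μ hμ
    rw [mem_spectrum_iff_eval] at hμ
    simpa using Polynomial.mem_roots'.mpr ⟨(A.charpoly_monic).ne_zero, hμ⟩
  calc (spectrum ℂ A).ncard ≤ (↑(A.charpoly.roots.toFinset) : Set ℂ).ncard :=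
        Set.ncard_le_ncard hsub (A.charpoly.roots.toFinset).finite_toSet
    _ = A.charpoly.roots.toFinset.card := Set.ncard_coe_finset _
    _ ≤ Multiset.card A.charpoly.roots := Multiset.toFinset_card_le _
    _ ≤ A.charpoly.natDegree := A.charpoly.card_roots'
    _ = n := by rw [Matrix.charpoly_natDegree_eq_dim, Fintype.card_fin]

/-- Every connected component of the structured pseudospectrum contains
an eigenvalue of `A`. -/
lemma exists_eigenvalue_mem_component (A : Matrix (Fin n) (Fin n) ℂ)
    (S : Finset (Fin n × Fin n)) {ε : ℝ} {w : ℂ}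
    (hw : w ∈ structPseudo A S ε) :
    ∃ μ ∈ spectrum ℂ A, μ ∈ connectedComponentIn (structPseudo A S ε) w := by
  classical
  set K := structPseudo A S ε with hKdef
  have hK : IsCompact K := structPseudo_isCompact A S ε
  simp only [structPseudo, Set.mem_iUnion, Set.mem_setOf_eq, hKdef] at hw
  obtain ⟨z, hz, hwspec⟩ := hw
  have hwK : w ∈ K := by
    rw [hKdef]
    exact Set.mem_biUnion hz hwspec
  by_contra hcon
  push_neg at hcon
  -- work in the subtype
  haveI : CompactSpace K := isCompact_iff_compactSpace.mp hK
  set w' : K := ⟨w, hwK⟩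
  set c := connectedComponent w' with hc
  have hcomp_eq : connectedComponentIn K w = Subtype.val '' c :=
    connectedComponentIn_eq_image hwK
  set s : Set K := Subtype.val ⁻¹' (spectrum ℂ A) with hs
  have hsclosed : IsClosed s :=
    ((spectrum_finite A).isClosed).preimage continuous_subtype_val
  have hscompact : IsCompact s := hsclosed.isCompact
  have hcs : ∀ x ∈ c, x ∉ s := by
    intro x hx hxs
    exact hcon x hxs (hcomp_eq ▸ ⟨x, hx, rfl⟩)
  -- clopen separation
  have hcinter := connectedComponent_eq_iInter_isClopen w'
  have hcover : s ⊆ ⋃ Z : {Z : Set K // IsClopen Z ∧ w' ∈ Z}, (↑Z : Set K)ᶜ := by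
    intro x hxs
    have hxc : x ∉ c := fun hxc => hcs x hxc hxs
    rw [hc, hcinter, Set.mem_iInter] at hxc
    push_neg at hxc
    obtain ⟨Z, hZ⟩ := hxc
    exact Set.mem_iUnion.mpr ⟨Z, hZ⟩
  obtain ⟨t, ht⟩ := hscompact.elim_finite_subcover _
    (fun Z : {Z : Set K // IsClopen Z ∧ w' ∈ Z} => Z.2.1.isClosed.isOpen_compl) hcover
  set V : Set K := ⋂ Z ∈ t, (↑Z : Set K) with hV
  have hVclopen : IsClopen V := isClopen_biInter_finset fun Z _ => Z.2.1
  have hw'V : w' ∈ V := Set.mem_iInter₂.mpr fun Z _ => Z.2.2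
  have hVs : ∀ x ∈ V, x ∉ s := by
    intro x hxV hxs
    obtain ⟨Z, hZt, hZx⟩ := Set.mem_iUnion₂.mp (ht hxs)
    exact hZx (Set.mem_iInter₂.mp hxV Z hZt)
  have hcV : c ⊆ V := by
    rw [hc, hcinter]
    exact fun x hx => Set.mem_iInter₂.mpr fun Z _ => Set.mem_iInter.mp hx Z
  -- back in ℂ
  set V' : Set ℂ := Subtype.val '' V with hV'
  set W' : Set ℂ := Subtype.val '' Vᶜ with hW'
  have hV'compact : IsCompact V' :=
    (hVclopen.isClosed.isCompact).image continuous_subtype_val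
  have hW'compact : IsCompact W' :=
    (hVclopen.compl.isClosed.isCompact).image continuous_subtype_val
  have hV'K : V' ⊆ K := by rintro x ⟨y, -, rfl⟩; exact y.2
  have hwV' : w ∈ V' := ⟨w', hw'V, rfl⟩
  have hV'spec : ∀ μ ∈ spectrum ℂ A, μ ∉ V' := by
    rintro μ hμ ⟨y, hyV, rfl⟩
    exact hVs y hyV hμ
  have hdisj : ∀ x ∈ K, x ∉ W' → x ∈ V' := by
    intro x hxK hxW
    rcases (em ((⟨x, hxK⟩ : K) ∈ V)) with h | h
    · exact ⟨⟨x, hxK⟩, h, rfl⟩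
    · exact absurd ⟨⟨x, hxK⟩, h, rfl⟩ hxW
  have hV'W' : ∀ x ∈ V', x ∉ W' := by
    rintro x ⟨y, hy, rfl⟩ ⟨y₂, hy₂, hYeq⟩
    rw [Subtype.val_injective hYeq] at hy₂
    exact hy₂ hy
  -- thickening
  obtain ⟨δ₀, hδ₀pos, hthick⟩ := hV'compact.exists_thickening_subset_open
    hW'compact.isClosed.isOpen_compl (fun x hx => hV'W' x hx)
  have hnear : ∀ x ∈ V', ∀ y ∈ K, dist y x < δ₀ → y ∈ V' := by
    intro x hx y hyK hd
    refine hdisj y hyK ?_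
    have : y ∈ Metric.thickening δ₀ V' := Metric.mem_thickening_iff.mpr ⟨x, hx, hd⟩
    exact hthick this
  -- the path argument
  set δ : ℝ := min δ₀ 1 with hδdef
  have hδpos : 0 < δ := lt_min hδ₀pos one_pos
  have hδ1 : δ ≤ 1 := min_le_right _ _
  have hδδ₀ : δ ≤ δ₀ := min_le_left _ _
  haveI : CompactSpace (Set.Icc (0:ℝ) 1) := isCompact_iff_compactSpace.mp isCompact_Icc
  haveI : PreconnectedSpace (Set.Icc (0:ℝ) 1) := Subtype.preconnectedSpace isPreconnected_Icc
  set B : Set.Icc (0:ℝ) 1 → Matrix (Fin n) (Fin n) ℂ :=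
    fun t => A + MS S ((t : ℝ) • z) with hB
  have hBcont : Continuous B :=
    continuous_const.add (continuous_MS.comp (continuous_subtype_val.smul continuous_const))
  have hBspec : ∀ t, spectrum ℂ (B t) ⊆ K := by
    intro t μ hμ
    rw [hKdef]
    refine Set.mem_biUnion (show ‖(t:ℝ) • z‖ ≤ ε from ?_) hμ
    rw [norm_smul, Real.norm_eq_abs, abs_of_nonneg t.2.1]
    calc (t:ℝ) * ‖z‖ ≤ 1 * ε := mul_le_mul t.2.2 hz (norm_nonneg z) zero_le_one
      _ = ε := one_mul ε
  set T : Set (Set.Icc (0:ℝ) 1) :=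
    {t | ∃ lam, lam ∈ spectrum ℂ (B t) ∧ lam ∈ V'} with hT
  have hTone : (⟨1, by norm_num⟩ : Set.Icc (0:ℝ) 1) ∈ T := by
    refine ⟨w, ?_, hwV'⟩
    simp only [hB, one_smul]
    exact hwspec
  have hTclosed : IsClosed T := by
    set Sig : Set ((Set.Icc (0:ℝ) 1) × ℂ) :=
      {q | (q.2 • (1 : Matrix (Fin n) (Fin n) ℂ) - B q.1).det = 0 ∧ q.2 ∈ V'} with hSig
    have hSigclosed : IsClosed Sig := by
      apply IsClosed.inter
      · apply isClosed_eq _ continuous_const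
        exact Continuous.matrix_det ((continuous_snd.smul continuous_const).sub
          (hBcont.comp continuous_fst))
      · exact hV'compact.isClosed.preimage continuous_snd
    have hSigcompact : IsCompact Sig := by
      refine (isCompact_univ.prod hV'compact).of_isClosed_subset hSigclosed ?_
      rintro ⟨t, μ⟩ ⟨-, hμ⟩
      exact ⟨Set.mem_univ _, hμ⟩
    have : T = Prod.fst '' Sig := by
      ext t
      constructor
      · rintro ⟨lam, hlam, hlamV⟩
        exact ⟨(t, lam), ⟨(mem_spectrum_iff_det _ _).mp hlam, hlamV⟩, rfl⟩
      · rintro ⟨⟨t₂, lam⟩, ⟨hdet, hlamV⟩, rfl⟩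
        exact ⟨lam, (mem_spectrum_iff_det _ _).mpr hdet, hlamV⟩
    rw [this]
    exact (hSigcompact.image continuous_fst).isClosed
  have hTopen : IsOpen T := by
    rw [isOpen_iff_mem_nhds]
    rintro t₀ ⟨lam₀, hlam₀spec, hlam₀V⟩
    have hgcont : Continuous fun t =>
        ‖(lam₀ • (1 : Matrix (Fin n) (Fin n) ℂ) - B t).det‖ := by
      apply Continuous.comp continuous_norm
      exact Continuous.matrix_det (continuous_const.sub hBcont)
    have hU : IsOpen {t | ‖
        (lam₀ • (1 : Matrix (Fin n) (Fin n) ℂ) - B t).det‖ < δ ^ n} :=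
      isOpen_lt hgcont continuous_const
    have ht₀U : t₀ ∈ {t | ‖
        (lam₀ • (1 : Matrix (Fin n) (Fin n) ℂ) - B t).det‖ < δ ^ n} := by
      have : (lam₀ • (1 : Matrix (Fin n) (Fin n) ℂ) - B t₀).det = 0 :=
        (mem_spectrum_iff_det _ _).mp hlam₀spec
      simp only [Set.mem_setOf_eq, this, norm_zero]
      exact pow_pos hδpos n
    refine Filter.mem_of_superset (hU.mem_nhds ht₀U) ?_
    intro t htU
    have hmonic : (B t).charpoly.Monic := Matrix.charpoly_monic _
    have hdeg : (B t).charpoly.natDegree = n := by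
      rw [Matrix.charpoly_natDegree_eq_dim, Fintype.card_fin]
    have heval : ‖(B t).charpoly.eval lam₀‖ < δ ^ n := by
      rw [charpoly_eval]
      exact htU
    obtain ⟨r, hr, hrnear⟩ := exists_root_near hmonic hdeg hδpos hδ1 heval
    have hrspec : r ∈ spectrum ℂ (B t) :=
      (mem_spectrum_iff_eval _ _).mpr ((Polynomial.mem_roots'.mp hr).2)
    have hrK : r ∈ K := hBspec t hrspec
    have hrV' : r ∈ V' := by
      refine hnear lam₀ hlam₀V r hrK ?_
      rw [Complex.dist_eq]
      calc ‖r - lam₀‖ = ‖lam₀ - r‖ := by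
            rw [norm_sub_rev]
        _ < δ := hrnear
        _ ≤ δ₀ := hδδ₀
    exact ⟨r, hrspec, hrV'⟩
  have hTuniv : T = Set.univ := by
    rcases isClopen_iff.mp ⟨hTclosed, hTopen⟩ with h | h
    · exact absurd hTone (h ▸ Set.notMem_empty _)
    · exact h
  have hzero : (⟨0, by norm_num⟩ : Set.Icc (0:ℝ) 1) ∈ T := hTuniv ▸ Set.mem_univ _
  obtain ⟨lam, hlamspec, hlamV⟩ := hzero
  have : B ⟨0, by norm_num⟩ = A := by
    simp only [hB, Set.Icc.mk_zero, Set.Icc.coe_zero, zero_smul, MS_zero, add_zero]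
  rw [this] at hlamspec
  exact hV'spec lam hlamspec hlamV

end helpers

/-- The structured ε-pseudospectrum has at most `n` connected components. -/
theorem structPseudo_ncard_components_le {n : ℕ} (A : Matrix (Fin n) (Fin n) ℂ)
    (S : Finset (Fin n × Fin n)) (ε : ℝ) (hε : 0 < ε) :
    {T : Set ℂ | ∃ w ∈ structPseudo A S ε,
        T = connectedComponentIn (structPseudo A S ε) w}.ncard ≤ n := by
  classical
  set K := structPseudo A S ε with hKdef
  set P : Set (Set ℂ) := {T | ∃ w ∈ K, T = connectedComponentIn K w} with hP
  set f : Set ℂ → ℂ := fun T =>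
    if h : (spectrum ℂ A ∩ T).Nonempty then h.choose else 0 with hf
  have hfT : ∀ T ∈ P, f T ∈ spectrum ℂ A ∩ T := by
    rintro T ⟨w, hw, rfl⟩
    obtain ⟨μ, hμspec, hμmem⟩ := exists_eigenvalue_mem_component A S hw
    have hne : (spectrum ℂ A ∩ connectedComponentIn K w).Nonempty := ⟨μ, hμspec, hμmem⟩
    simp only [hf, dif_pos hne]
    exact hne.choose_spec
  have hmaps : ∀ T ∈ P, f T ∈ spectrum ℂ A := fun T hT => (hfT T hT).1
  have hinj : Set.InjOn f P := by
    rintro T₁ hT₁ T₂ hT₂ heq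
    obtain ⟨w₁, hw₁, rfl⟩ := hT₁
    obtain ⟨w₂, hw₂, rfl⟩ := hT₂
    have h₁ := (hfT _ ⟨w₁, hw₁, rfl⟩).2
    have h₂ := (hfT _ ⟨w₂, hw₂, rfl⟩).2
    rw [heq] at h₁
    have e1 := connectedComponentIn_eq h₁
    have e2 := connectedComponentIn_eq h₂
    exact e1.trans e2.symm
  calc P.ncard ≤ (spectrum ℂ A).ncard :=
        Set.ncard_le_ncard_of_injOn f hmaps hinj (spectrum_finite A)
    _ ≤ n := spectrum_ncard_le A
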